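/- If 0 ≤ a₁ ≤ ⋯ ≤ a_n with a_{n-1} = a_n − 1, then [a_n]_q!/∏_{i=1}^{n-1}[a_i+1]_q = [a_{n-1}]_q!/∏_{i=1}^{n-2}[a_i+1]_q; moreover if {a₁,…,a_{n-1}} is realizable as D(T') for some rooted tree T', then {a₁,…,a_n} is realizable as D(T) for the tree T obtained from T' by stabilization (adding a new root below the old root). -/

import Mathlib

open Finset

/-- The q-number `[n]_q = 1 + q + ⋯ + q^{n-1}` as a rational function over ℚ. -/
noncomputable def qnum (n : ℕ) : RatFunc ℚ := ∑ i ∈ Finset.range n, RatFunc.X ^ i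

/-- The q-factorial `[n]_q! = ∏_{i=1}^n [i]_q`. -/
noncomputable def qfact (n : ℕ) : RatFunc ℚ := ∏ i ∈ Finset.range n, qnum (i + 1)

/-- The q-binomial coefficient `[m+n]_q! / ([m]_q! [n]_q!)`. -/
noncomputable def qbinom (m n : ℕ) : RatFunc ℚ := qfact (m + n) / (qfact m * qfact n)

/-- The q-multinomial coefficient of a list of nonnegative integers. -/
noncomputable def qmultinomial (l : List ℕ) : RatFunc ℚ :=
  qfact l.sum / (l.map qfact).prod

/-- Plane rooted trees: a root together with an ordered list of subtrees. -/
inductive PTree where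
  | node : List PTree → PTree

namespace PTree

/-- Number of edges of a rooted tree. -/
def edges : PTree → ℕ
  | node ts => (ts.attach.map fun t => edges t.1 + 1).sum
decreasing_by simp only [PTree.node.sizeOf_spec, Nat.add_comm 1]; exact Nat.lt_succ_of_lt (List.sizeOf_lt_of_mem t.2)

/-- Multiset of descendant counts `d(v)` over the non-root vertices of `T`. -/
def ND : PTree → Multiset ℕ
  | node ts => (ts.attach.map fun t => edges t.1 ::ₘ ND t.1).sum
decreasing_by simp only [PTree.node.sizeOf_spec, Nat.add_comm 1]; exact Nat.lt_succ_of_lt (List.sizeOf_lt_of_mem t.2)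

/-- Multiset `D(T) = {d(v) : v ∈ V(T)}` of descendant counts over all vertices. -/
def D (t : PTree) : Multiset ℕ := edges t ::ₘ ND t

/-- The plucking polynomial `Q(T) = [d(r)]_q! / ∏_{v ≠ r} [d(v)+1]_q`. -/
noncomputable def Q (t : PTree) : RatFunc ℚ :=
  qfact (edges t) / ((ND t).map fun x => qnum (x + 1)).prod

end PTree


lemma qnum_ne_zero (m : ℕ) : qnum (m + 1) ≠ 0 := by
  have hq : qnum (m + 1) =
      algebraMap (Polynomial ℚ) (RatFunc ℚ) (∑ i ∈ Finset.range (m + 1), Polynomial.X ^ i) := by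
    rw [qnum, map_sum]
    simp [RatFunc.algebraMap_X]
  rw [hq]
  refine RatFunc.algebraMap_ne_zero ?_
  intro hp
  have := congrArg (fun p => Polynomial.coeff p 0) hp
  simp [Polynomial.finset_sum_coeff, Polynomial.coeff_X_pow, Finset.sum_ite_eq'] at this

namespace PTree

theorem mem_ND_le : ∀ (t : PTree), ∀ x ∈ t.ND, x ≤ t.edges
  | node ts => by
    intro x hx
    rw [ND] at hx
    rw [edges]
    rw [← Multiset.sum_coe, ← Multiset.map_coe] at hx
    obtain ⟨m, hm, hxm⟩ := Multiset.mem_join.mp hx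
    rw [Multiset.mem_map] at hm
    obtain ⟨t', ht', rfl⟩ := hm
    have hle : edges t'.1 + 1 ≤ (ts.attach.map fun t => edges t.1 + 1).sum := by
      rw [← Multiset.sum_coe, ← Multiset.map_coe]
      exact Multiset.single_le_sum (fun y _ => Nat.zero_le y) _
        (Multiset.mem_map_of_mem _ ht')
    rcases Multiset.mem_cons.mp hxm with rfl | hxm
    · omega
    · have := mem_ND_le t'.1 x hxm
      omega
decreasing_by simp only [PTree.node.sizeOf_spec, Nat.add_comm 1]; exact Nat.lt_succ_of_lt (List.sizeOf_lt_of_mem t'.2)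

theorem edges_node_single (t : PTree) : edges (node [t]) = edges t + 1 := by
  rw [edges]; simp [List.attach]

theorem ND_node_single (t : PTree) : ND (node [t]) = edges t ::ₘ ND t := by
  rw [ND]; simp [List.attach]

end PTree

open PTree in
/-- If `a_{n-1} = a_n − 1` (0-indexed: `a (n-2) + 1 = a (n-1)`), then
`[a_n]_q!/∏_{i=1}^{n-1}[a_i+1]_q = [a_{n-1}]_q!/∏_{i=1}^{n-2}[a_i+1]_q`; moreover, if `T'`
realizes `{a₁,…,a_{n-1}}` then the stabilization of `T'` (a new root attached below the old
root) realizes `{a₁,…,a_n}`. -/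
theorem stabilization_realizes (n : ℕ) (hn : 2 ≤ n) (a : ℕ → ℕ)
    (hmono : ∀ i j, i ≤ j → j < n → a i ≤ a j) (h : a (n - 2) + 1 = a (n - 1)) :
    (qfact (a (n - 1)) / ∏ i ∈ Finset.range (n - 1), qnum (a i + 1) =
      qfact (a (n - 2)) / ∏ i ∈ Finset.range (n - 2), qnum (a i + 1)) ∧
    (∀ t' : PTree, D t' = (Multiset.range (n - 1)).map a →
      D (node [t']) = (Multiset.range n).map a) := by
  obtain ⟨m, rfl⟩ : ∃ m, n = m + 2 := ⟨n - 2, by omega⟩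
  simp only [show m + 2 - 1 = m + 1 from rfl, show m + 2 - 2 = m from rfl] at h ⊢
  constructor
  · rw [← h, show qfact (a m + 1) = qfact (a m) * qnum (a m + 1) by
      rw [qfact, qfact, Finset.prod_range_succ],
      Finset.prod_range_succ]
    exact mul_div_mul_right _ _ (qnum_ne_zero (a m))
  · intro t' ht'
    have he : edges t' = a m := by
      have h1 : edges t' ∈ (Multiset.range (m + 1)).map a := by
        rw [← ht', D]; exact Multiset.mem_cons_self _ _
      obtain ⟨i, hi, hia⟩ := Multiset.mem_map.mp h1
      rw [Multiset.mem_range] at hi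
      have hle1 : edges t' ≤ a m := hia ▸ hmono i m (by omega) (by omega)
      have h2 : a m ∈ D t' := by
        rw [ht']
        exact Multiset.mem_map_of_mem a (Multiset.mem_range.mpr (by omega))
      rw [D, Multiset.mem_cons] at h2
      rcases h2 with h2 | h2
      · omega
      · have := PTree.mem_ND_le t' _ h2
        omega
    rw [D, edges_node_single, ND_node_single, he]
    have hD : (edges t' ::ₘ ND t') = (Multiset.range (m + 1)).map a := by
      rw [← D, ht']
    rw [he] at hD
    rw [hD, Multiset.range_succ, Multiset.map_cons, h]

    simp [Multiset.range_succ]
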